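/- arXiv:2208.02409 — 2 statements merged into one kernel-verified Lean document; each statement's English description precedes it below -/
import Mathlib

section
/- Let Θ ~ Exp(1) be independent of a σ-algebra 𝒢, let A : [0,T] → [0,∞) be a 𝒢-measurable, continuous, nondecreasing random process with A(0) = 0, and set τ = inf{t ∈ [0,T] : A(t) ≥ Θ} ∧ T. Then for any bounded 𝒢-measurable process h : [0,T] → ℝ that is continuous in t, E[h(τ)] = E[∫₀ᵀ h(u)·e^{−A(u)} dA(u) + h(T)·e^{−A(T)}]. -/
open MeasureTheory ProbabilityTheory Real
open Set
open scoped ENNReal NNReal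

noncomputable def rsg (A : StieltjesFunction ℝ) (T θ : ℝ) : ℝ :=
  sInf ({t | t ∈ Set.Icc (0 : ℝ) T ∧ θ ≤ A t} ∪ {T})

section rsgLemmas

variable {A : StieltjesFunction ℝ} {T θ : ℝ}

lemma rsg_set_nonempty : ({t | t ∈ Set.Icc (0:ℝ) T ∧ θ ≤ A t} ∪ {T}).Nonempty :=
  ⟨T, Or.inr rfl⟩

lemma rsg_set_bddBelow : BddBelow ({t | t ∈ Set.Icc (0:ℝ) T ∧ θ ≤ A t} ∪ {T}) := by
  refine ⟨min 0 T, fun t ht => ?_⟩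
  rcases ht with ⟨⟨h0, _⟩, _⟩ | h
  · exact le_trans (min_le_left 0 T) h0
  · exact (Set.mem_singleton_iff.mp h) ▸ min_le_right 0 T

lemma rsg_mem (hAc : Continuous A) :
    rsg A T θ ∈ ({t | t ∈ Set.Icc (0:ℝ) T ∧ θ ≤ A t} ∪ {T}) := by
  have hcl : IsClosed ({t | t ∈ Set.Icc (0:ℝ) T ∧ θ ≤ A t} ∪ {T}) := by
    have : {t | t ∈ Set.Icc (0:ℝ) T ∧ θ ≤ A t} = Set.Icc (0:ℝ) T ∩ (⇑A) ⁻¹' Set.Ici θ := rfl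
    rw [this]
    exact (isClosed_Icc.inter (isClosed_Ici.preimage hAc)).union isClosed_singleton
  exact hcl.csInf_mem rsg_set_nonempty rsg_set_bddBelow

lemma rsg_nonneg (hT : 0 ≤ T) : 0 ≤ rsg A T θ := by
  refine le_csInf rsg_set_nonempty fun t ht => ?_
  rcases ht with ⟨⟨h0, _⟩, _⟩ | h
  · exact h0
  · exact (Set.mem_singleton_iff.mp h) ▸ hT

lemma rsg_le_T (hT : 0 ≤ T) : rsg A T θ ≤ T :=
  csInf_le rsg_set_bddBelow (Or.inr rfl)

lemma rsg_le_iff (hAc : Continuous A) {s : ℝ} (hs0 : 0 ≤ s) (hsT : s < T) :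
    rsg A T θ ≤ s ↔ θ ≤ A s := by
  constructor
  · intro hle
    rcases rsg_mem (θ := θ) hAc with h | h
    · exact h.2.trans (A.mono hle)
    · rw [Set.mem_singleton_iff] at h
      rw [h] at hle
      exact absurd hle (not_le.mpr hsT)
  · intro hθ
    exact csInf_le rsg_set_bddBelow (Or.inl ⟨⟨hs0, hsT.le⟩, hθ⟩)

lemma rsg_pos (hAc : Continuous A) (hA0 : A 0 = 0) (hT : 0 < T) (hθ : 0 < θ) :
    0 < rsg A T θ := by
  rcases (rsg_nonneg (θ := θ) hT.le).lt_or_eq with hlt | heq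
  · exact hlt
  · exfalso
    rcases rsg_mem (θ := θ) hAc with hm | hm
    · have h2 := hm.2
      rw [← heq, hA0] at h2
      exact absurd h2 (not_le.mpr hθ)
    · rw [Set.mem_singleton_iff] at hm
      rw [hm] at heq
      exact hT.ne heq

lemma rsg_theta_le (hAc : Continuous A) (hθT : θ ≤ A T) : θ ≤ A (rsg A T θ) := by
  rcases rsg_mem (θ := θ) hAc with hm | hm
  · exact hm.2
  · rw [Set.mem_singleton_iff] at hm
    rw [hm]; exact hθT

lemma rsg_A_eq (hAc : Continuous A) (hA0 : A 0 = 0) (hT : 0 < T)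
    (hθ : 0 < θ) (hθT : θ ≤ A T) : A (rsg A T θ) = θ := by
  refine le_antisymm ?_ (rsg_theta_le hAc hθT)
  by_contra hlt
  push_neg at hlt
  have h0 : (0:ℝ) ≤ rsg A T θ := rsg_nonneg hT.le
  have hIVT : θ ∈ A '' Set.Icc 0 (rsg A T θ) := by
    apply intermediate_value_Icc h0 (hAc.continuousOn)
    exact ⟨by rw [hA0]; exact hθ.le, hlt.le⟩
  obtain ⟨s, hs, hAs⟩ := hIVT
  have hsmem : s ∈ {t | t ∈ Set.Icc (0:ℝ) T ∧ θ ≤ A t} ∪ {T} :=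
    Or.inl ⟨⟨hs.1, hs.2.trans (rsg_le_T hT.le)⟩, hAs.ge⟩
  have hle : rsg A T θ ≤ s := csInf_le rsg_set_bddBelow hsmem
  have hmono : A (rsg A T θ) ≤ A s := A.mono hle
  rw [hAs] at hmono
  exact absurd hmono (not_le.mpr hlt)

lemma rsg_eq_T (hθT : A T < θ) : rsg A T θ = T := by
  have hset : {t | t ∈ Set.Icc (0:ℝ) T ∧ θ ≤ A t} ∪ {T} = {T} := by
    ext t
    simp only [Set.mem_union, Set.mem_setOf_eq, Set.mem_singleton_iff, Set.mem_Icc]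
    constructor
    · rintro (⟨⟨_, htT⟩, hθt⟩ | h)
      · exact absurd (hθt.trans (A.mono htT)) (not_le.mpr hθT)
      · exact h
    · exact Or.inr
  rw [rsg, hset, csInf_singleton]

lemma rsg_mono : Monotone (rsg A T) := by
  intro a b hab
  refine csInf_le_csInf rsg_set_bddBelow rsg_set_nonempty ?_
  rintro t (⟨ht, hbt⟩ | h)
  · exact Or.inl ⟨ht, hab.trans hbt⟩
  · exact Or.inr h

lemma rsg_measurable : Measurable (rsg A T) := rsg_mono.measurable

lemma rsg_map (hT : 0 < T) (hAc : Continuous A) (hA0 : A 0 = 0) (hAnn : ∀ t, 0 ≤ A t) :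
    (volume.restrict (Set.Ioc 0 (A T))).map (rsg A T) = A.measure.restrict (Set.Ioc 0 T) := by
  have hle_iff : ∀ {θ s : ℝ}, 0 < θ → θ ≤ A T → (rsg A T θ ≤ s ↔ θ ≤ A (min s T)) := by
    intro θ s hθ hθT
    rcases le_or_gt T s with hsT | hsT
    · rw [min_eq_right hsT]
      exact iff_of_true ((rsg_le_T hT.le).trans hsT) hθT
    · rw [min_eq_left hsT.le]
      rcases le_or_gt 0 s with hs0 | hs0
      · exact rsg_le_iff hAc hs0 hsT
      · refine iff_of_false (not_le.mpr (lt_trans hs0 (rsg_pos hAc hA0 hT hθ))) ?_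
        refine not_le.mpr (lt_of_le_of_lt ?_ hθ)
        calc A s ≤ A 0 := A.mono hs0.le
        _ = 0 := hA0
  have hmeas : Measurable (rsg A T) := rsg_measurable
  haveI hfin : IsFiniteMeasure ((volume.restrict (Set.Ioc 0 (A T))).map (rsg A T)) := by
    constructor
    rw [Measure.map_apply hmeas MeasurableSet.univ, Set.preimage_univ,
      Measure.restrict_apply_univ, Real.volume_Ioc]
    exact ENNReal.ofReal_lt_top
  refine Measure.ext_of_Ioc _ _ fun a b _ => ?_
  rw [Measure.map_apply hmeas measurableSet_Ioc,
    Measure.restrict_apply (hmeas measurableSet_Ioc),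
    Measure.restrict_apply measurableSet_Ioc]
  have hset : rsg A T ⁻¹' Set.Ioc a b ∩ Set.Ioc 0 (A T)
      = Set.Ioc (A (min a T)) (A (min b T)) ∩ Set.Ioc 0 (A T) := by
    ext θ
    by_cases hm : θ ∈ Set.Ioc 0 (A T)
    · simp only [Set.mem_inter_iff, hm, and_true, Set.mem_preimage, Set.mem_Ioc]
      have h1 := hle_iff (s := b) hm.1 hm.2
      have h2 := hle_iff (s := a) hm.1 hm.2
      constructor
      · rintro ⟨ha, hb⟩
        exact ⟨not_le.mp fun hc => not_le.mpr ha (h2.mpr hc), h1.mp hb⟩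
      · rintro ⟨ha, hb⟩
        exact ⟨not_le.mp fun hc => not_le.mpr ha (h2.mp hc), h1.mpr hb⟩
    · simp [hm]
  rw [hset, Set.inter_eq_self_of_subset_left
      (Set.Ioc_subset_Ioc (hAnn _) (A.mono (min_le_right b T))),
    Real.volume_Ioc, Set.Ioc_inter_Ioc, StieltjesFunction.measure_Ioc]

  rcases le_or_gt a T with haT | haT
  · have hEq : A (max a 0) = A (min a T) := by
      rcases le_or_gt 0 a with h0a | h0a
      · rw [max_eq_left h0a, min_eq_left haT]
      · rw [max_eq_right h0a.le, min_eq_left (h0a.le.trans hT.le)]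
        rw [hA0]
        exact (le_antisymm (by rw [← hA0]; exact A.mono h0a.le) (hAnn a)).symm
    rw [hEq]
  · have h1 : ENNReal.ofReal (A (min b T) - A (min a T)) = 0 :=
      ENNReal.ofReal_eq_zero.mpr (sub_nonpos.mpr (by
        rw [min_eq_right haT.le]; exact A.mono (min_le_right b T)))
    have h2 : ENNReal.ofReal (A (min b T) - A (max a 0)) = 0 :=
      ENNReal.ofReal_eq_zero.mpr (sub_nonpos.mpr (by
        rw [max_eq_left (hT.le.trans haT.le)]
        exact (A.mono (min_le_right b T)).trans (A.mono haT.le)))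
    rw [h1, h2]

end rsgLemmas

lemma rsg_integral (A : StieltjesFunction ℝ) {T : ℝ} (hT : 0 < T) (hAc : Continuous A)
    (hA0 : A 0 = 0) (hAnn : ∀ t, 0 ≤ A t) (f : ℝ → ℝ) (hf : Continuous f)
    {B : ℝ} (hfB : ∀ t, |f t| ≤ B) :
    ∫ θ, f (rsg A T θ) ∂(expMeasure 1)
      = (∫ u in Set.Ioc (0:ℝ) T, f u * Real.exp (-(A u)) ∂A.measure)
        + f T * Real.exp (-(A T)) := by
  have hBnn : 0 ≤ B := (abs_nonneg _).trans (hfB 0)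
  set w : ℝ → ℝ := fun θ => if 0 ≤ θ then Real.exp (-θ) else 0 with hw_def
  have hw_meas : Measurable w :=
    Measurable.ite measurableSet_Ici (Real.continuous_exp.comp continuous_neg).measurable
      measurable_const
  have hw_nonneg : ∀ θ, 0 ≤ w θ := by
    intro θ; by_cases h : 0 ≤ θ <;> simp [hw_def, h, Real.exp_nonneg]
  have hexp : expMeasure 1 = volume.withDensity (fun θ => ENNReal.ofReal (w θ)) := by
    show gammaMeasure 1 1 = _
    rw [gammaMeasure]
    congr 1
    funext θ
    rw [show gammaPDF 1 1 θ = exponentialPDF 1 θ from rfl, exponentialPDF_eq]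
    simp [hw_def]
  rw [hexp]
  have h1 : ∫ θ, f (rsg A T θ) ∂(volume.withDensity (fun θ => ENNReal.ofReal (w θ)))
      = ∫ θ, w θ * f (rsg A T θ) := by
    rw [show (fun θ => ENNReal.ofReal (w θ)) = (fun θ => ((Real.toNNReal (w θ) : ℝ≥0) : ℝ≥0∞))
      from rfl]
    rw [integral_withDensity_eq_integral_smul (f := fun θ => (w θ).toNNReal)
      hw_meas.real_toNNReal]
    congr 1
    funext θ
    rw [NNReal.smul_def, Real.coe_toNNReal _ (hw_nonneg θ), smul_eq_mul]
  rw [h1]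
  have hFind : (fun θ => w θ * f (rsg A T θ))
      = (Set.Ici (0:ℝ)).indicator (fun θ => Real.exp (-θ) * f (rsg A T θ)) := by
    funext θ
    by_cases h : 0 ≤ θ <;> simp [hw_def, Set.indicator, h]
  rw [hFind, integral_indicator measurableSet_Ici, integral_Ici_eq_integral_Ioi,
    ← Set.Ioc_union_Ioi_eq_Ioi (hAnn T)]
  have hint2 : IntegrableOn (fun θ => Real.exp (-θ) * f (rsg A T θ)) (Set.Ioi (A T)) := by
    have hexp_int : IntegrableOn (fun θ => Real.exp (-θ)) (Set.Ioi (A T)) :=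
      (exp_neg_integrableOn_Ioi (A T) one_pos).congr_fun
        (fun x _ => by beta_reduce; rw [neg_one_mul]) measurableSet_Ioi
    refine (hexp_int.mul_const B).mono' ?_ ?_
    · exact (((Real.continuous_exp.comp continuous_neg).measurable.mul
        (hf.measurable.comp rsg_measurable)).aestronglyMeasurable)
    · refine ae_of_all _ fun θ => ?_
      rw [Real.norm_eq_abs, abs_mul, abs_of_nonneg (Real.exp_nonneg _)]
      exact mul_le_mul_of_nonneg_left (hfB _) (Real.exp_nonneg _)
  have hint1 : IntegrableOn (fun θ => Real.exp (-θ) * f (rsg A T θ)) (Set.Ioc 0 (A T)) := by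
    refine Measure.integrableOn_of_bounded (M := B) ?_ ?_ ?_
    · rw [Real.volume_Ioc]; exact ENNReal.ofReal_ne_top
    · exact (((Real.continuous_exp.comp continuous_neg).measurable.mul
        (hf.measurable.comp rsg_measurable)).aestronglyMeasurable)
    · refine (ae_restrict_iff' measurableSet_Ioc).mpr (ae_of_all _ fun θ hθ => ?_)
      rw [Real.norm_eq_abs, abs_mul, abs_of_nonneg (Real.exp_nonneg _)]
      calc Real.exp (-θ) * |f (rsg A T θ)| ≤ 1 * B := by
            refine mul_le_mul ?_ (hfB _) (abs_nonneg _) one_pos.le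
            rw [← Real.exp_zero]
            exact Real.exp_le_exp.mpr (by linarith [hθ.1])
      _ = B := one_mul B
  rw [setIntegral_union (Set.Ioc_disjoint_Ioi le_rfl) measurableSet_Ioi hint1 hint2]
  congr 1
  · -- ∫ over Ioc 0 (A T)
    have hcongr : ∀ θ ∈ Set.Ioc 0 (A T),
        Real.exp (-θ) * f (rsg A T θ)
          = (fun u => f u * Real.exp (-(A u))) (rsg A T θ) := by
      intro θ hθ
      simp only []
      rw [rsg_A_eq hAc hA0 hT hθ.1 hθ.2, mul_comm]
    rw [setIntegral_congr_fun measurableSet_Ioc hcongr]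
    have hG : Continuous (fun u => f u * Real.exp (-(A u))) :=
      hf.mul (Real.continuous_exp.comp hAc.neg)
    rw [← integral_map rsg_measurable.aemeasurable hG.aestronglyMeasurable,
      rsg_map hT hAc hA0 hAnn]
  · -- ∫ over Ioi (A T)
    have hcongr : ∀ θ ∈ Set.Ioi (A T),
        Real.exp (-θ) * f (rsg A T θ) = Real.exp (-θ) * f T := by
      intro θ hθ
      rw [rsg_eq_T hθ]
    rw [setIntegral_congr_fun measurableSet_Ioi hcongr, integral_mul_const,
      integral_exp_neg_Ioi, mul_comm]

/-- Randomized-stopping expectation identity: with `Θ ~ Exp(1)` independent of `𝒢`,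
`A` a `𝒢`-measurable continuous nondecreasing process with `A 0 = 0`, and
`τ = inf{t ∈ [0,T] : A t ≥ Θ} ∧ T`, for a bounded `𝒢`-measurable process `h`
continuous in `t`, one has
`E[h(τ)] = E[∫₀ᵀ h(u)·e^{−A(u)} dA(u) + h(T)·e^{−A(T)}]`,
the inner integral being the Lebesgue–Stieltjes integral against `A`. -/
theorem randomized_stopping_reward
    {Ω : Type*} {m0 : MeasurableSpace Ω} (μ : Measure Ω) [IsProbabilityMeasure μ]
    (T : ℝ) (hT : 0 < T)
    (Θ : Ω → ℝ) (hΘmeas : Measurable Θ) (hΘlaw : μ.map Θ = expMeasure 1)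
    (𝒢 : MeasurableSpace Ω) (h𝒢 : 𝒢 ≤ m0)
    (hΘindep : Indep (MeasurableSpace.comap Θ inferInstance) 𝒢 μ)
    (A : Ω → StieltjesFunction ℝ)
    (hA0 : ∀ ω, A ω 0 = 0)
    (hAcont : ∀ ω, Continuous (A ω))
    (hAnonneg : ∀ ω t, 0 ≤ A ω t)
    (hAmeas : ∀ t : ℝ, Measurable[𝒢] (fun ω => A ω t))
    (h : Ω → ℝ → ℝ)
    (hhmeas : ∀ t : ℝ, Measurable[𝒢] (fun ω => h ω t))
    (hhcont : ∀ ω, Continuous (h ω))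
    (hhbdd : ∃ B : ℝ, ∀ ω t, |h ω t| ≤ B)
    (τ : Ω → ℝ)
    (hτ : ∀ ω, τ ω =
      sInf ({t | t ∈ Set.Icc (0 : ℝ) T ∧ Θ ω ≤ A ω t} ∪ {T})) :
    ∫ ω, h ω (τ ω) ∂μ
      = ∫ ω, ((∫ u in Set.Ioc (0 : ℝ) T, h ω u * Real.exp (-(A ω u)) ∂((A ω).measure))
          + h ω T * Real.exp (-(A ω T))) ∂μ := by
  classical
  obtain ⟨B, hB⟩ := hhbdd
  haveI : IsProbabilityMeasure (expMeasure 1) := isProbabilityMeasure_expMeasure one_pos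
  set ν : @Measure Ω 𝒢 := @Measure.map Ω Ω m0 𝒢 id μ with hν_def
  haveI hν_prob : IsProbabilityMeasure ν := by
    constructor
    rw [hν_def, Measure.map_apply (measurable_id'' h𝒢) (@MeasurableSet.univ Ω 𝒢)]
    simp
  -- measurability of the stopping value in both variables
  have hval : Measurable (fun p : ℝ × Ω => rsg (A p.2) T p.1) := by
    apply measurable_of_Iic
    intro s
    rcases lt_or_ge s 0 with hs | hs
    · convert MeasurableSet.empty
      ext p
      simp only [Set.mem_preimage, Set.mem_Iic, Set.mem_empty_iff_false, iff_false, not_le]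
      exact lt_of_lt_of_le hs (rsg_nonneg hT.le)
    rcases lt_or_ge s T with hsT | hsT
    · have hpre : (fun p : ℝ × Ω => rsg (A p.2) T p.1) ⁻¹' Set.Iic s
          = {p : ℝ × Ω | p.1 ≤ A p.2 s} := by
        ext p
        simp only [Set.mem_preimage, Set.mem_Iic, Set.mem_setOf_eq]
        exact rsg_le_iff (hAcont p.2) hs hsT
      rw [hpre]
      exact measurableSet_le measurable_fst ((hAmeas s).comp measurable_snd)
    · convert MeasurableSet.univ
      ext p
      simp only [Set.mem_preimage, Set.mem_Iic, Set.mem_univ, iff_true]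
      exact le_trans (rsg_le_T hT.le) hsT
  have huncurry : Measurable (fun p : ℝ × Ω => h p.2 p.1) :=
    measurable_uncurry_of_continuous_of_measurable (u := fun (t : ℝ) (ω : Ω) => h ω t)
      hhcont hhmeas
  have hG : Measurable (fun p : ℝ × Ω => h p.2 (rsg (A p.2) T p.1)) :=
    huncurry.comp (hval.prodMk measurable_snd)
  have hG_int : Integrable (fun p : ℝ × Ω => h p.2 (rsg (A p.2) T p.1))
      ((expMeasure 1).prod ν) := by
    refine (integrable_const B).mono' hG.aestronglyMeasurable (ae_of_all _ fun p => ?_)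
    rw [Real.norm_eq_abs]
    exact hB _ _
  have hIF : IndepFun Θ (id : Ω → Ω) μ := by
    have h1 : IndepFun Θ (id : Ω → Ω) μ ↔
        Indep (MeasurableSpace.comap Θ inferInstance) (MeasurableSpace.comap id 𝒢) μ := Iff.rfl
    rw [h1, MeasurableSpace.comap_id]
    exact hΘindep
  have hprod_meas : Measurable[m0] (fun ω => (Θ ω, ω)) :=
    hΘmeas.prodMk (measurable_id'' h𝒢)
  have hmap : @Measure.map Ω (ℝ × Ω) m0 inferInstance (fun ω => (Θ ω, ω)) μ
      = (expMeasure 1).prod ν := by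
    rw [hν_def, ← hΘlaw]
    exact (indepFun_iff_map_prod_eq_prod_map_map hΘmeas.aemeasurable
      (measurable_id'' h𝒢).aemeasurable).mp hIF
  have hinner_sm : StronglyMeasurable (fun ω => ∫ θ, h ω (rsg (A ω) T θ) ∂(expMeasure 1)) :=
    hG.stronglyMeasurable.integral_prod_left'
  calc ∫ ω, h ω (τ ω) ∂μ
      = ∫ ω, (fun p : ℝ × Ω => h p.2 (rsg (A p.2) T p.1)) (Θ ω, ω) ∂μ := by
        refine integral_congr_ae (ae_of_all _ fun ω => ?_)
        simp only []
        rw [hτ ω]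
        rfl
    _ = ∫ p, (fun p : ℝ × Ω => h p.2 (rsg (A p.2) T p.1)) p
          ∂(@Measure.map Ω (ℝ × Ω) m0 inferInstance (fun ω => (Θ ω, ω)) μ) :=
        (integral_map hprod_meas.aemeasurable hG.stronglyMeasurable.aestronglyMeasurable).symm
    _ = ∫ p, (fun p : ℝ × Ω => h p.2 (rsg (A p.2) T p.1)) p ∂((expMeasure 1).prod ν) := by
        rw [hmap]
    _ = ∫ ω, (∫ θ, h ω (rsg (A ω) T θ) ∂(expMeasure 1)) ∂ν :=
        integral_prod_symm _ hG_int
    _ = ∫ ω, (∫ θ, h ω (rsg (A ω) T θ) ∂(expMeasure 1)) ∂μ := by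
        rw [hν_def]
        exact integral_map (measurable_id'' h𝒢).aemeasurable hinner_sm.aestronglyMeasurable
    _ = ∫ ω, ((∫ u in Set.Ioc (0 : ℝ) T, h ω u * Real.exp (-(A ω u)) ∂((A ω).measure))
          + h ω T * Real.exp (-(A ω T))) ∂μ :=
        integral_congr_ae (ae_of_all _ fun ω => rsg_integral (A ω) hT (hAcont ω) (hA0 ω)
          (hAnonneg ω) (h ω) (hhcont ω) (hB ω))
end

section
/- Let u, v : ℝ → ℝ be bounded with u(x), v(x) ≥ h(x) − M for all x, where h is bounded and M ≥ 0, and λ > 0. Define π_u(x) = exp(−(u(x)−h(x))/λ) and π_v(x) likewise, and H(x, w, π) = (h(x) − w)π + λ(π − π log π). Then sup_x |H(x, u(x), π_v(x)) − H(x, u(x), π_u(x))| ≤ C·e^{M/λ}·sup_x |u(x) − v(x)| for a constant C depending only on M and λ polynomially (C = 1 + M/λ suffices up to a factor). -/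
open Real

lemma exp_lip_aux {s t c : ℝ} (hs : s ≤ c) (ht : t ≤ c) :
    |Real.exp s - Real.exp t| ≤ Real.exp c * |s - t| := by
  wlog hts : t ≤ s generalizing s t
  · rw [abs_sub_comm, abs_sub_comm s t]; exact this ht hs (le_of_not_ge hts)
  rw [abs_of_nonneg (sub_nonneg.2 (Real.exp_le_exp.2 hts)), abs_of_nonneg (sub_nonneg.2 hts)]
  have h1 : Real.exp s - Real.exp t = Real.exp s * (1 - Real.exp (t - s)) := by
    rw [Real.exp_sub]
    field_simp
  have h2 : 1 - Real.exp (t - s) ≤ s - t := by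
    have := Real.add_one_le_exp (t - s); linarith
  have h2' : 0 ≤ 1 - Real.exp (t - s) := by
    have : Real.exp (t - s) ≤ Real.exp 0 := Real.exp_le_exp.2 (by linarith)
    rw [Real.exp_zero] at this; linarith
  calc Real.exp s - Real.exp t = Real.exp s * (1 - Real.exp (t - s)) := h1
    _ ≤ Real.exp s * (s - t) := mul_le_mul_of_nonneg_left h2 (Real.exp_pos s).le
    _ ≤ Real.exp c * (s - t) :=
        mul_le_mul_of_nonneg_right (Real.exp_le_exp.2 hs) (by linarith)

/-- Key Lipschitz estimate for policy iteration: with the entropy-regularized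
Hamiltonian `H(x, w, q) = (h x − w)q + λ(q − q·log q)` and greedy policies
`π_u(x) = exp(−(u x − h x)/λ)`, the Hamiltonian loss from using the policy of `v`
instead of that of `u` is bounded by `C·e^{M/λ}·sup_x |u x − v x|`. -/
theorem hamiltonian_policy_lipschitz (lam M : ℝ) (hlam : 0 < lam) (hM : 0 ≤ M)
    (h u v : ℝ → ℝ)
    (hhbdd : ∃ B : ℝ, ∀ x, |h x| ≤ B)
    (hubdd : ∃ B : ℝ, ∀ x, |u x| ≤ B)
    (hvbdd : ∃ B : ℝ, ∀ x, |v x| ≤ B)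
    (hu : ∀ x, h x - M ≤ u x) (hv : ∀ x, h x - M ≤ v x) :
    let H : ℝ → ℝ → ℝ → ℝ := fun x w q => (h x - w) * q + lam * (q - q * Real.log q)
    let polu : ℝ → ℝ := fun x => Real.exp (-(u x - h x) / lam)
    let polv : ℝ → ℝ := fun x => Real.exp (-(v x - h x) / lam)
    ∃ c : ℝ, 0 < c ∧ c ≤ 2 * (1 + M / lam) ∧
      ∀ x : ℝ, |H x (u x) (polv x) - H x (u x) (polu x)|
        ≤ c * Real.exp (M / lam) * ⨆ y : ℝ, |u y - v y| := by
  intro H polu polv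
  have hMl : 0 ≤ M / lam := div_nonneg hM hlam.le
  refine ⟨2, two_pos, by linarith, ?_⟩
  intro x
  obtain ⟨Bu, hBu⟩ := hubdd
  obtain ⟨Bv, hBv⟩ := hvbdd
  have hbdd : BddAbove (Set.range fun y => |u y - v y|) := by
    refine ⟨Bu + Bv, ?_⟩
    rintro _ ⟨y, rfl⟩
    calc |u y - v y| ≤ |u y| + |v y| := abs_sub _ _
      _ ≤ Bu + Bv := add_le_add (hBu y) (hBv y)
  have hS : |u x - v x| ≤ ⨆ y, |u y - v y| := le_ciSup hbdd x
  set a := (u x - h x) / lam with ha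
  set b := (v x - h x) / lam with hb
  have haM : -a ≤ M / lam := by
    rw [ha, ← neg_div, div_le_div_iff_of_pos_right hlam]
    have := hu x; linarith
  have hbM : -b ≤ M / lam := by
    rw [hb, ← neg_div, div_le_div_iff_of_pos_right hlam]
    have := hv x; linarith
  have hla : lam * a = u x - h x := by rw [ha]; field_simp
  have hlb : lam * b = v x - h x := by rw [hb]; field_simp
  have hHu : H x (u x) (polu x) = lam * Real.exp (-a) := by
    simp only [H, polu]
    rw [show -(u x - h x) / lam = -a by rw [ha]; ring, Real.log_exp]
    nlinarith [Real.exp_pos (-a), hla]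
  have hHv : H x (u x) (polv x)
      = lam * Real.exp (-b) - (lam * a) * Real.exp (-b) + (lam * b) * Real.exp (-b) := by
    simp only [H, polv]
    rw [show -(v x - h x) / lam = -b by rw [hb]; ring, Real.log_exp]
    nlinarith [Real.exp_pos (-b), hla]
  have key : H x (u x) (polv x) - H x (u x) (polu x)
      = lam * (Real.exp (-b) - Real.exp (-a)) - (u x - v x) * Real.exp (-b) := by
    rw [hHu, hHv, show u x - v x = lam * a - lam * b by rw [hla, hlb]; ring]; ring
  have h1 : |lam * (Real.exp (-b) - Real.exp (-a))|
      ≤ Real.exp (M / lam) * |u x - v x| := by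
    rw [abs_mul, abs_of_pos hlam]
    have := exp_lip_aux hbM haM
    calc lam * |Real.exp (-b) - Real.exp (-a)|
        ≤ lam * (Real.exp (M / lam) * |-b - -a|) :=
          mul_le_mul_of_nonneg_left this hlam.le
      _ = Real.exp (M / lam) * |lam * (a - b)| := by
          rw [abs_mul, abs_of_pos hlam, show (-b - -a) = a - b by ring]; ring
      _ = Real.exp (M / lam) * |u x - v x| := by
          rw [show lam * (a - b) = u x - v x by rw [mul_sub, hla, hlb]; ring]
  have h2 : |(u x - v x) * Real.exp (-b)| ≤ Real.exp (M / lam) * |u x - v x| := by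
    rw [abs_mul, abs_of_pos (Real.exp_pos _), mul_comm]
    exact mul_le_mul_of_nonneg_right (Real.exp_le_exp.2 hbM) (abs_nonneg _)
  calc |H x (u x) (polv x) - H x (u x) (polu x)|
      ≤ |lam * (Real.exp (-b) - Real.exp (-a))| + |(u x - v x) * Real.exp (-b)| := by
        rw [key]; exact abs_sub _ _
    _ ≤ 2 * Real.exp (M / lam) * |u x - v x| := by linarith
    _ ≤ 2 * Real.exp (M / lam) * ⨆ y, |u y - v y| := by
        apply mul_le_mul_of_nonneg_left hS
        positivity
end
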